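/- Let p > 1 and let w₂ : ℝ → (0,∞) be locally integrable with w₂ ∈ A_1^- (i.e., M^+ w₂ ≤ C w₂ a.e., where M^+ f(x) = sup_{h>0} (1/h)∫_x^{x+h}|f|). Then w₂^{1-p} ∈ RH_∞^+: there is a constant C' such that for almost every x and every b > x, w₂(x)^{1-p} ≤ C' (1/(b-x)) ∫_x^b w₂(y)^{1-p} dy. -/

import Mathlib

open MeasureTheory intervalIntegral

/-- Tangent line inequality for `t ↦ t ^ c` with `c < 0`. -/
lemma tangent_rpow_neg {c A t : ℝ} (hc : c < 0) (hA : 0 < A) (ht : 0 < t) :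
    A ^ c + c * A ^ (c - 1) * (t - A) ≤ t ^ c := by
  have hu : 0 < t / A := div_pos ht hA
  have h1 : 1 + c * (t / A - 1) ≤ (t / A) ^ c := by
    have hlog : Real.log (t / A) ≤ t / A - 1 := Real.log_le_sub_one_of_pos hu
    have h2 : c * (t / A - 1) ≤ c * Real.log (t / A) :=
      mul_le_mul_of_nonpos_left hlog hc.le
    have h3 : c * Real.log (t / A) + 1 ≤ Real.exp (c * Real.log (t / A)) :=
      Real.add_one_le_exp _
    rw [Real.rpow_def_of_pos hu, mul_comm (Real.log (t / A)) c]
    linarith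
  have key : A ^ c * (1 + c * (t / A - 1)) ≤ A ^ c * (t / A) ^ c :=
    mul_le_mul_of_nonneg_left h1 (Real.rpow_nonneg hA.le _)
  have hAc : A ^ c * (t / A) ^ c = t ^ c := by
    rw [← Real.mul_rpow hA.le (le_of_lt hu)]
    rw [mul_div_cancel₀ _ hA.ne']
  have hAc1 : A ^ (c - 1) = A ^ c / A := by
    rw [Real.rpow_sub hA, Real.rpow_one]
  calc A ^ c + c * A ^ (c - 1) * (t - A)
      = A ^ c * (1 + c * (t / A - 1)) := by
        rw [hAc1]; field_simp
    _ ≤ A ^ c * (t / A) ^ c := key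
    _ = t ^ c := hAc

theorem a1_minus_pow_mem_rh_infty_plus (p : ℝ) (hp : 1 < p)
    (w₂ : ℝ → ℝ) (hw : ∀ x, 0 < w₂ x) (hloc : LocallyIntegrable w₂ volume)
    (C : ℝ) (hA1 : ∀ᵐ x : ℝ, ∀ h : ℝ, 0 < h →
      h⁻¹ * ∫ y in x..(x + h), w₂ y ≤ C * w₂ x) :
    ∃ C' : ℝ, ∀ᵐ x : ℝ, ∀ b : ℝ, x < b →
      w₂ x ^ (1 - p) ≤ C' * ((b - x)⁻¹ * ∫ y in x..b, w₂ y ^ (1 - p)) := by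
  have hc : (1 : ℝ) - p < 0 := by linarith
  set c : ℝ := 1 - p with hcdef
  have hw2int : ∀ a b : ℝ, IntervalIntegrable w₂ volume a b := fun a b =>
    intervalIntegrable_iff.mpr
      ((hloc.integrableOn_isCompact isCompact_uIcc).mono_set Set.Ioc_subset_Icc_self)
  have hIpos : ∀ a b : ℝ, a < b → 0 < ∫ y in a..b, w₂ y := fun a b hab =>
    intervalIntegral_pos_of_pos (hw2int a b) hw hab
  -- C > 0
  have hC : 0 < C := by
    obtain ⟨x₀, hx₀⟩ := hA1.exists
    have h1 := hx₀ 1 one_pos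
    have h2 : 0 < ∫ y in x₀..(x₀ + 1), w₂ y := hIpos _ _ (by linarith)
    have h3 : 0 < C * w₂ x₀ := by
      calc (0:ℝ) < 1⁻¹ * ∫ y in x₀..(x₀ + 1), w₂ y := by simpa using h2
        _ ≤ C * w₂ x₀ := h1
    nlinarith [hw x₀]
  refine ⟨C ^ (p - 1), ?_⟩
  filter_upwards [hA1] with x hx b hxb
  -- average of w₂ on [x, b]
  set I : ℝ := ∫ y in x..b, w₂ y with hIdef
  have hIp : 0 < I := hIpos x b hxb
  have hbx : 0 < b - x := by linarith
  set A : ℝ := (b - x)⁻¹ * I with hAdef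
  have hA : 0 < A := mul_pos (inv_pos.mpr hbx) hIp
  have hAC : A ≤ C * w₂ x := by
    have := hx (b - x) hbx
    rwa [show x + (b - x) = b by ring] at this
  -- integrability of w₂ ^ c on [x, b] via an a.e. lower bound on w₂
  set J : ℝ := ∫ y in b..(b + 1), w₂ y with hJdef
  have hJ : 0 < J := hIpos b (b + 1) (by linarith)
  set δ : ℝ := C⁻¹ * ((b + 1 - x)⁻¹ * J) with hδdef
  have hδ : 0 < δ :=
    mul_pos (inv_pos.mpr hC) (mul_pos (inv_pos.mpr (by linarith)) hJ)
  have hlow : ∀ᵐ y ∂(volume.restrict (Set.Ioc x b)), δ ≤ w₂ y := by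
    filter_upwards [ae_restrict_of_ae hA1, ae_restrict_mem measurableSet_Ioc]
      with y hy hymem
    obtain ⟨hy1, hy2⟩ := hymem
    have hh : 0 < b + 1 - y := by linarith
    have h1 := hy (b + 1 - y) hh
    rw [show y + (b + 1 - y) = b + 1 by ring] at h1
    have hsplit : (∫ z in y..(b+1), w₂ z) = (∫ z in y..b, w₂ z) + J :=
      (integral_add_adjacent_intervals (hw2int y b) (hw2int b (b+1))).symm
    have hnn : 0 ≤ ∫ z in y..b, w₂ z :=
      intervalIntegral.integral_nonneg hy2 (fun z _ => (hw z).le)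
    have h2 : (b + 1 - x)⁻¹ * J ≤ (b + 1 - y)⁻¹ * ∫ z in y..(b+1), w₂ z := by
      have hinv : (b + 1 - x)⁻¹ ≤ (b + 1 - y)⁻¹ :=
        inv_anti₀ hh (by linarith)
      have hJle : J ≤ ∫ z in y..(b+1), w₂ z := by rw [hsplit]; linarith
      calc (b + 1 - x)⁻¹ * J ≤ (b + 1 - y)⁻¹ * J :=
            mul_le_mul_of_nonneg_right hinv hJ.le
        _ ≤ (b + 1 - y)⁻¹ * ∫ z in y..(b+1), w₂ z :=
            mul_le_mul_of_nonneg_left hJle (inv_pos.mpr hh).le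
    have h3 : (b + 1 - x)⁻¹ * J ≤ C * w₂ y := le_trans h2 h1
    have h4 : δ * C = (b + 1 - x)⁻¹ * J := by
      calc δ * C = (C⁻¹ * C) * ((b + 1 - x)⁻¹ * J) := by rw [hδdef]; ring
        _ = (b + 1 - x)⁻¹ * J := by rw [inv_mul_cancel₀ hC.ne', one_mul]
    have h5 : δ * C ≤ w₂ y * C := by rw [h4]; linarith [h3]
    exact le_of_mul_le_mul_right h5 hC
  have hmeas : AEStronglyMeasurable (fun y => w₂ y ^ c) volume := by
    exact (hloc.aestronglyMeasurable.aemeasurable.pow aemeasurable_const).aestronglyMeasurable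
  have hint : IntervalIntegrable (fun y => w₂ y ^ c) volume x b := by
    rw [_root_.intervalIntegrable_iff_integrableOn_Ioc_of_le hxb.le]
    refine Integrable.mono' (g := fun _ : ℝ => δ ^ c)
      (integrableOn_const measure_Ioc_lt_top.ne)
      hmeas.restrict ?_
    · filter_upwards [hlow] with y hy
      rw [Real.norm_of_nonneg (Real.rpow_nonneg (hw y).le _)]
      exact Real.rpow_le_rpow_of_nonpos hδ hy hc.le
  -- Jensen via the tangent line
  have hptwise : ∀ y ∈ Set.Icc x b,
      A ^ c + c * A ^ (c - 1) * (w₂ y - A) ≤ w₂ y ^ c := fun y _ =>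
    tangent_rpow_neg hc hA (hw y)
  have hlhsint : IntervalIntegrable
      (fun y => A ^ c + c * A ^ (c - 1) * (w₂ y - A)) volume x b := by
    exact (_root_.intervalIntegrable_const).add
      (((hw2int x b).sub _root_.intervalIntegrable_const).const_mul _)
  have hmono := intervalIntegral.integral_mono_on hxb.le hlhsint hint hptwise
  have hlhs : (∫ y in x..b, (A ^ c + c * A ^ (c - 1) * (w₂ y - A)))
      = (b - x) * A ^ c := by
    rw [intervalIntegral.integral_add _root_.intervalIntegrable_const
        (((hw2int x b).sub _root_.intervalIntegrable_const).const_mul _),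
      intervalIntegral.integral_const_mul,
      intervalIntegral.integral_sub (hw2int x b) _root_.intervalIntegrable_const,
      intervalIntegral.integral_const, intervalIntegral.integral_const]
    have : (b - x) * A = I := by
      rw [hAdef]; field_simp
    simp only [smul_eq_mul, ← hIdef]
    rw [show I - (b - x) * A = 0 by rw [this]; ring]
    ring
  rw [hlhs] at hmono
  have hAvg : A ^ c ≤ (b - x)⁻¹ * ∫ y in x..b, w₂ y ^ c := by
    calc A ^ c = (b - x)⁻¹ * ((b - x) * A ^ c) := by field_simp
      _ ≤ (b - x)⁻¹ * ∫ y in x..b, w₂ y ^ c :=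
          mul_le_mul_of_nonneg_left hmono (inv_pos.mpr hbx).le
  -- conclude
  have hCx : w₂ x ^ c ≤ C ^ (p - 1) * A ^ c := by
    have h1 : (C * w₂ x) ^ c ≤ A ^ c :=
      Real.rpow_le_rpow_of_nonpos hA hAC hc.le
    have h2 : (C * w₂ x) ^ c = C ^ c * w₂ x ^ c :=
      Real.mul_rpow hC.le (hw x).le
    have h3 : C ^ (p - 1) * C ^ c = 1 := by
      rw [← Real.rpow_add hC]
      norm_num [hcdef]
    calc w₂ x ^ c = C ^ (p - 1) * (C ^ c * w₂ x ^ c) := by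
          rw [← mul_assoc, h3, one_mul]
      _ ≤ C ^ (p - 1) * A ^ c := by
          rw [← h2]
          exact mul_le_mul_of_nonneg_left h1 (Real.rpow_nonneg hC.le _)
  calc w₂ x ^ c ≤ C ^ (p - 1) * A ^ c := hCx
    _ ≤ C ^ (p - 1) * ((b - x)⁻¹ * ∫ y in x..b, w₂ y ^ c) :=
        mul_le_mul_of_nonneg_left hAvg (Real.rpow_nonneg hC.le _)
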